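/- Let A be a real symmetric positive definite N×N matrix such that for every μ ≥ 0 the matrix (μI + A)^{−1} has all entries nonnegative. Then for every α ∈ (0,1) and every vector f ∈ ℝ^N with all entries nonnegative, the vector A^{−α} f has all entries nonnegative. -/

import Mathlib

open Set Real Matrix MeasureTheory


lemma base_integrable {α : ℝ} (h0 : 0 < α) (h1 : α < 1) :
    IntegrableOn (fun x : ℝ => x ^ (-α) * (1 + x)⁻¹) (Ioi (0:ℝ)) := by
  have hm : Measurable (fun x : ℝ => x ^ (-α) * (1 + x)⁻¹) := by fun_prop
  rw [← Ioc_union_Ioi_eq_Ioi (zero_le_one : (0:ℝ) ≤ 1)]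
  apply IntegrableOn.union
  · -- near 0
    have hbase : IntegrableOn (fun x : ℝ => x ^ (-α)) (Ioc (0:ℝ) 1) := by
      have := intervalIntegral.intervalIntegrable_rpow' (a := 0) (b := 1) (r := -α)
        (by linarith)
      rwa [intervalIntegrable_iff_integrableOn_Ioc_of_le zero_le_one] at this
    apply hbase.mono' hm.aestronglyMeasurable.restrict
    filter_upwards [ae_restrict_mem measurableSet_Ioc] with x hx
    have hx0 : 0 < x := hx.1
    have h1x : (1:ℝ) ≤ 1 + x := by linarith
    rw [Real.norm_eq_abs, abs_mul, abs_of_nonneg (Real.rpow_nonneg hx0.le _),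
      abs_of_nonneg (by positivity : (0:ℝ) ≤ (1+x)⁻¹)]
    calc x ^ (-α) * (1 + x)⁻¹ ≤ x ^ (-α) * 1 := by
          gcongr
          exact inv_le_one_of_one_le₀ h1x
      _ = x ^ (-α) := mul_one _
  · -- near infinity
    have hbase : IntegrableOn (fun x : ℝ => x ^ (-α - 1)) (Ioi (1:ℝ)) :=
      (integrableOn_Ioi_rpow_iff one_pos).2 (by linarith)
    apply hbase.mono' hm.aestronglyMeasurable.restrict
    filter_upwards [ae_restrict_mem measurableSet_Ioi] with x hx
    have hx0 : (0:ℝ) < x := lt_trans one_pos hx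
    rw [Real.norm_eq_abs, abs_mul, abs_of_nonneg (Real.rpow_nonneg hx0.le _),
      abs_of_nonneg (by positivity : (0:ℝ) ≤ (1+x)⁻¹)]
    have : (1 + x)⁻¹ ≤ x⁻¹ := by
      apply inv_anti₀ hx0; linarith
    calc x ^ (-α) * (1 + x)⁻¹ ≤ x ^ (-α) * x⁻¹ := by gcongr
      _ = x ^ (-α - 1) := by
          rw [← Real.rpow_neg_one x, ← Real.rpow_add hx0]; ring_nf

lemma scale_pointwise {α lam : ℝ} (hl : 0 < lam) {x : ℝ} (hx : 0 < x) :
    x ^ (-α) * (x + lam)⁻¹ = lam ^ (-α - 1) * ((lam⁻¹ * x) ^ (-α) * (1 + lam⁻¹ * x)⁻¹) := by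
  have h1 : (lam⁻¹ * x) ^ (-α) = lam⁻¹ ^ (-α) * x ^ (-α) :=
    Real.mul_rpow (by positivity) hx.le
  have h2 : lam⁻¹ ^ (-α) = lam ^ α := by
    rw [← Real.rpow_neg_one lam, ← Real.rpow_mul hl.le]; norm_num
  have h3 : (1 + lam⁻¹ * x)⁻¹ = lam * (x + lam)⁻¹ := by
    rw [show (1 + lam⁻¹ * x) = lam⁻¹ * (x + lam) by field_simp; ring]
    rw [mul_inv, inv_inv]
  rw [h1, h2, h3]
  have h4 : lam ^ (-α - 1) * (lam ^ α * x ^ (-α) * (lam * (x + lam)⁻¹))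
      = (lam ^ (-α - 1) * lam ^ α * lam) * (x ^ (-α) * (x + lam)⁻¹) := by ring
  rw [h4, ← Real.rpow_add hl]
  rw [show lam ^ (-α - 1 + α) * lam = lam ^ (-α - 1 + α) * lam ^ (1:ℝ) by rw [Real.rpow_one]]
  rw [← Real.rpow_add hl, show -α - 1 + α + 1 = (0:ℝ) by ring, Real.rpow_zero, one_mul]

lemma scaled_integrable {α lam : ℝ} (h0 : 0 < α) (h1 : α < 1) (hl : 0 < lam)
    (hbase : IntegrableOn (fun x : ℝ => x ^ (-α) * (1 + x)⁻¹) (Ioi (0:ℝ))) :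
    IntegrableOn (fun x : ℝ => x ^ (-α) * (x + lam)⁻¹) (Ioi (0:ℝ)) := by
  have h : IntegrableOn (fun x : ℝ => lam ^ (-α-1) *
      ((lam⁻¹ * x) ^ (-α) * (1 + lam⁻¹ * x)⁻¹)) (Ioi (0:ℝ)) := by
    apply Integrable.const_mul
    have := (integrableOn_Ioi_comp_mul_left_iff
      (fun x : ℝ => x ^ (-α) * (1 + x)⁻¹) 0 (inv_pos.2 hl)).2
    have h' : IntegrableOn (fun x : ℝ => (lam⁻¹ * x) ^ (-α) * (1 + lam⁻¹ * x)⁻¹) (Ioi 0) := by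
      simpa using this (by simpa using hbase)
    exact h'
  exact (integrableOn_congr_fun (fun x (hx : x ∈ Ioi (0:ℝ)) => scale_pointwise hl hx) measurableSet_Ioi).2 h

lemma scaled_integral {α lam : ℝ} (hl : 0 < lam) :
    ∫ x in Ioi (0:ℝ), x ^ (-α) * (x + lam)⁻¹
      = lam ^ (-α) * ∫ x in Ioi (0:ℝ), x ^ (-α) * (1 + x)⁻¹ := by
  rw [setIntegral_congr_fun measurableSet_Ioi
    (fun x hx => scale_pointwise hl (mem_Ioi.1 hx))]
  rw [MeasureTheory.integral_const_mul]
  rw [integral_comp_mul_left_Ioi (fun x : ℝ => x ^ (-α) * (1 + x)⁻¹) 0 (inv_pos.2 hl)]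
  simp only [mul_zero, inv_inv, smul_eq_mul]
  rw [← mul_assoc]
  congr 1
  rw [show lam ^ (-α - 1) * lam = lam ^ (-α - 1) * lam ^ (1:ℝ) by rw [Real.rpow_one]]
  rw [← Real.rpow_add hl, show -α - 1 + 1 = -α by ring]

lemma base_pos {α : ℝ} (h0 : 0 < α) (h1 : α < 1)
    (hbase : IntegrableOn (fun x : ℝ => x ^ (-α) * (1 + x)⁻¹) (Ioi (0:ℝ))) :
    0 < ∫ x in Ioi (0:ℝ), x ^ (-α) * (1 + x)⁻¹ := by
  rw [setIntegral_pos_iff_support_of_nonneg_ae ?_ hbase]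
  · apply lt_of_lt_of_le _ (measure_mono (?_ : Ioi (0:ℝ) ⊆ _))
    · rw [Real.volume_Ioi]; exact ENNReal.zero_lt_top
    · intro x hx
      refine ⟨?_, hx⟩
      have hx0 : (0:ℝ) < x := hx
      have : 0 < x ^ (-α) * (1 + x)⁻¹ := by positivity
      exact Function.mem_support.2 this.ne'
  · filter_upwards [ae_restrict_mem measurableSet_Ioi] with x hx
    have hx0 : (0:ℝ) < x := hx
    positivity

lemma vecMulVec_mul_vecMulVec {N : ℕ} (u v w z : Fin N → ℝ) :
    vecMulVec u v * vecMulVec w z = dotProduct v w • vecMulVec u z := by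
  ext i k
  simp only [Matrix.mul_apply, vecMulVec_apply, Matrix.smul_apply, smul_eq_mul,
    dotProduct, Finset.sum_mul]
  exact Finset.sum_congr rfl fun j _ => by ring

lemma completeness {N : ℕ} (ψ : Fin N → (Fin N → ℝ))
    (horth : ∀ i j, dotProduct (ψ i) (ψ j) = if i = j then 1 else 0) :
    ∑ j, vecMulVec (ψ j) (ψ j) = (1 : Matrix (Fin N) (Fin N) ℝ) := by
  set P : Matrix (Fin N) (Fin N) ℝ := Matrix.of (fun j k => ψ j k) with hP
  have h1 : P * Pᵀ = 1 := by
    ext i j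
    simp only [Matrix.mul_apply, Matrix.transpose_apply, Matrix.one_apply, hP, Matrix.of_apply]
    rw [← horth i j]; rfl
  have h2 : Pᵀ * P = 1 := mul_eq_one_comm.mp h1
  ext i k
  rw [← h2]
  simp only [Matrix.sum_apply, vecMulVec_apply, Matrix.mul_apply, Matrix.transpose_apply,
    hP, Matrix.of_apply]

lemma resolvent_formula {N : ℕ} (A : Matrix (Fin N) (Fin N) ℝ)
    (ψ : Fin N → (Fin N → ℝ)) (lam : Fin N → ℝ)
    (horth : ∀ i j, dotProduct (ψ i) (ψ j) = if i = j then 1 else 0)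
    (hpos : ∀ j, 0 < lam j)
    (hA : A = ∑ j, lam j • Matrix.vecMulVec (ψ j) (ψ j))
    {μ : ℝ} (hμ : 0 ≤ μ) :
    (μ • (1 : Matrix (Fin N) (Fin N) ℝ) + A)⁻¹
      = ∑ j, (μ + lam j)⁻¹ • vecMulVec (ψ j) (ψ j) := by
  set R : Matrix (Fin N) (Fin N) ℝ := ∑ j, (μ + lam j)⁻¹ • vecMulVec (ψ j) (ψ j) with hR
  apply Matrix.inv_eq_right_inv
  have hAR : A * R = ∑ j, (lam j * (μ + lam j)⁻¹) • vecMulVec (ψ j) (ψ j) := by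
    rw [hA, hR, Finset.sum_mul]
    apply Finset.sum_congr rfl
    intro j _
    rw [Finset.mul_sum]
    rw [Finset.sum_eq_single j]
    · rw [smul_mul_assoc, mul_smul_comm, vecMulVec_mul_vecMulVec, horth j j]
      simp [smul_smul]
    · intro k _ hk
      rw [smul_mul_assoc, mul_smul_comm, vecMulVec_mul_vecMulVec, horth j k]
      simp [if_neg (Ne.symm hk), hk]
    · intro h; exact absurd (Finset.mem_univ j) h
  have h1R : (μ • (1 : Matrix (Fin N) (Fin N) ℝ)) * R = ∑ j, (μ * (μ + lam j)⁻¹) • vecMulVec (ψ j) (ψ j) := by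
    rw [smul_mul_assoc, one_mul, hR, Finset.smul_sum]
    exact Finset.sum_congr rfl fun j _ => by rw [smul_smul]
  rw [add_mul, hAR, h1R, ← Finset.sum_add_distrib]
  rw [← completeness ψ horth]
  apply Finset.sum_congr rfl
  intro j _
  rw [← add_smul]
  have hml : 0 < μ + lam j := by linarith [hpos j]
  rw [← add_mul, mul_inv_cancel₀ hml.ne', one_smul]

/-- Positivity preservation for the spectral fractional power: if a real symmetric
positive definite matrix `A = Σⱼ λⱼ ψⱼψⱼᵀ` (spectral decomposition with orthonormal
eigenvectors and positive eigenvalues) is such that `(μI + A)⁻¹` has nonnegative entries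
for every `μ ≥ 0`, then for every `α ∈ (0,1)` and every entrywise nonnegative vector `f`,
the vector `A^{-α} f = (Σⱼ λⱼ^{-α} ψⱼψⱼᵀ) f` is entrywise nonnegative. -/
theorem matrix_fractional_power_positivity (N : ℕ) (A : Matrix (Fin N) (Fin N) ℝ)
    (ψ : Fin N → (Fin N → ℝ)) (lam : Fin N → ℝ)
    (horth : ∀ i j, dotProduct (ψ i) (ψ j) = if i = j then 1 else 0)
    (hpos : ∀ j, 0 < lam j)
    (hA : A = ∑ j, lam j • Matrix.vecMulVec (ψ j) (ψ j))
    (hmono : ∀ μ : ℝ, 0 ≤ μ →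
      ∀ i j, 0 ≤ (μ • (1 : Matrix (Fin N) (Fin N) ℝ) + A)⁻¹ i j)
    (α : ℝ) (hα : α ∈ Set.Ioo (0:ℝ) 1)
    (f : Fin N → ℝ) (hf : ∀ i, 0 ≤ f i) :
    ∀ i, 0 ≤ (∑ j, lam j ^ (-α) • Matrix.vecMulVec (ψ j) (ψ j)).mulVec f i := by
  obtain ⟨h0, h1⟩ := hα
  have hbase := base_integrable h0 h1
  set I₀ : ℝ := ∫ x in Ioi (0:ℝ), x ^ (-α) * (1 + x)⁻¹ with hI₀
  have hI₀pos : 0 < I₀ := base_pos h0 h1 hbase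
  intro i
  set c : Fin N → ℝ := fun j => ψ j i * ∑ k, ψ j k * f k with hc
  have hswap : ∀ d : Fin N → ℝ,
      (∑ j, d j • vecMulVec (ψ j) (ψ j)).mulVec f i = ∑ j, d j * c j := by
    intro d
    simp only [Matrix.mulVec, dotProduct, Matrix.sum_apply, Matrix.smul_apply,
      vecMulVec_apply, smul_eq_mul, Finset.sum_mul]
    rw [Finset.sum_comm]
    apply Finset.sum_congr rfl
    intro j _
    rw [hc]
    simp only [Finset.mul_sum]
    exact Finset.sum_congr rfl fun k _ => by ring
  have hg : ∀ μ : ℝ, 0 ≤ μ → 0 ≤ ∑ j, (μ + lam j)⁻¹ * c j := by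
    intro μ hμ
    have h := hmono μ hμ
    rw [resolvent_formula A ψ lam horth hpos hA hμ] at h
    rw [← hswap (fun j => (μ + lam j)⁻¹)]
    simp only [Matrix.mulVec, dotProduct]
    exact Finset.sum_nonneg fun k _ => mul_nonneg (h i k) (hf k)
  rw [hswap (fun j => lam j ^ (-α))]
  have key : ∑ j, lam j ^ (-α) * c j
      = I₀⁻¹ * ∫ x in Ioi (0:ℝ), ∑ j, x ^ (-α) * (x + lam j)⁻¹ * c j := by
    rw [MeasureTheory.integral_finset_sum _
      (fun j _ => (scaled_integrable h0 h1 (hpos j) hbase).mul_const (c j))]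
    rw [Finset.mul_sum]
    apply Finset.sum_congr rfl
    intro j _
    rw [MeasureTheory.integral_mul_const, scaled_integral (hpos j), ← hI₀]
    field_simp
  rw [key]
  apply mul_nonneg (inv_nonneg.2 hI₀pos.le)
  apply setIntegral_nonneg measurableSet_Ioi
  intro x hx
  have hx0 : (0:ℝ) < x := hx
  have hrw : ∑ j, x ^ (-α) * (x + lam j)⁻¹ * c j
      = x ^ (-α) * ∑ j, (x + lam j)⁻¹ * c j := by
    rw [Finset.mul_sum]
    exact Finset.sum_congr rfl fun j _ => by ring
  rw [hrw]
  exact mul_nonneg (Real.rpow_nonneg hx0.le _) (hg x hx0.le)
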